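/- Let X be a locally compact Hausdorff space, E a monotone complete and normal partially ordered vector space, and π : C_c(X) → E a positive linear operator. Suppose μ and μ′ are two regular Borel measures with values in the extended positive cone of E, each representing π via the order integral on C_c(X). Then μ = μ′. -/

import Mathlib

open Set CompactlySupported

/-- A positive, order continuous linear functional. -/
def IsPosOrderContFunctional {E : Type*} [AddCommGroup E] [PartialOrder E] [IsOrderedAddMonoid E] [Module ℝ E]
    (φ : E →ₗ[ℝ] ℝ) : Prop :=
  (∀ x : E, 0 ≤ x → 0 ≤ φ x) ∧
  ∀ S : Set E, S.Nonempty → DirectedOn (· ≥ ·) S → IsGLB S 0 → IsGLB (φ '' S) 0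

/-- `E` is normal. -/
def IsNormalPOVS (E : Type*) [AddCommGroup E] [PartialOrder E] [IsOrderedAddMonoid E] [Module ℝ E] : Prop :=
  ∀ x : E, (∀ φ : E →ₗ[ℝ] ℝ, IsPosOrderContFunctional φ → 0 ≤ φ x) ↔ 0 ≤ x

/-- `E` is monotone complete. -/
def MonotoneComplete (E : Type*) [Preorder E] : Prop :=
  ∀ S : Set E, S.Nonempty → DirectedOn (· ≤ ·) S → BddAbove S → ∃ y, IsLUB S y

section Measures

variable {X : Type*} [TopologicalSpace X] [MeasurableSpace X] [BorelSpace X]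
variable {E : Type*} [AddCommGroup E] [PartialOrder E] [IsOrderedAddMonoid E]

/-- A positive `WithTop E`-valued measure on the Borel σ-algebra of `X`. -/
def IsPosMeasure (μ : Set X → WithTop E) : Prop :=
  μ ∅ = 0 ∧ (∀ Δ : Set X, MeasurableSet Δ → 0 ≤ μ Δ) ∧
  ∀ Δ : ℕ → Set X, (∀ n, MeasurableSet (Δ n)) → Pairwise (Function.onFun Disjoint Δ) →
    IsLUB {y : WithTop E | ∃ N : ℕ, y = ∑ n ∈ Finset.range N, μ (Δ n)} (μ (⋃ n, Δ n))

def InnerRegularAt (μ : Set X → WithTop E) (Δ : Set X) : Prop :=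
  IsLUB {y : WithTop E | ∃ K : Set X, IsCompact K ∧ K ⊆ Δ ∧ y = μ K} (μ Δ)

def OuterRegularAt (μ : Set X → WithTop E) (Δ : Set X) : Prop :=
  IsGLB {y : WithTop E | ∃ V : Set X, IsOpen V ∧ Δ ⊆ V ∧ y = μ V} (μ Δ)

def IsRegularBorel (μ : Set X → WithTop E) : Prop :=
  (∀ K : Set X, IsCompact K → μ K ≠ ⊤) ∧
  (∀ V : Set X, IsOpen V → InnerRegularAt μ V) ∧
  (∀ Δ : Set X, MeasurableSet Δ → OuterRegularAt μ Δ)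

variable [Module ℝ E]

/-- Scalar multiplication on `WithTop E`: `0 • ∞ = 0` and `r • ∞ = ∞` for `r ≠ 0`. -/
noncomputable def tsmul (r : ℝ) (y : WithTop E) : WithTop E :=
  if r = 0 then 0 else WithTop.map (fun x : E => r • x) y

/-- Integrals of positive elementary functions below `f`; the order integral of `f ≥ 0`
is the least upper bound of this set. -/
def elemBelow (μ : Set X → WithTop E) (f : X → ℝ) : Set (WithTop E) :=
  {y : WithTop E | ∃ (n : ℕ) (r : Fin n → ℝ) (Δ : Fin n → Set X),
    (∀ i, 0 ≤ r i) ∧ (∀ i, MeasurableSet (Δ i)) ∧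
    (∀ x : X, (∑ i, Set.indicator (Δ i) (fun _ => r i) x) ≤ f x) ∧
    y = ∑ i, tsmul (r i) (μ (Δ i))}

end Measures


section AuxLemmas

variable {X : Type*} [TopologicalSpace X] [MeasurableSpace X] [BorelSpace X]
variable {E : Type*} [AddCommGroup E] [PartialOrder E] [IsOrderedAddMonoid E]

lemma IsPosMeasure.add_of_disjoint {μ : Set X → WithTop E} (hμ : IsPosMeasure μ)
    {A B : Set X} (hA : MeasurableSet A) (hB : MeasurableSet B) (hd : Disjoint A B) :
    μ (A ∪ B) = μ A + μ B := by
  classical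
  set Δ : ℕ → Set X := fun k => if k = 0 then A else if k = 1 then B else ∅ with hΔdef
  have hmeas : ∀ k, MeasurableSet (Δ k) := by
    intro k; simp only [hΔdef]
    split_ifs <;> first | exact hA | exact hB | exact MeasurableSet.empty
  have hpair : Pairwise (Function.onFun Disjoint Δ) := by
    intro m k hmk
    simp only [Function.onFun, hΔdef]
    rcases m with _ | _ | m <;> rcases k with _ | _ | k <;>
      simp_all [Set.disjoint_empty, Set.empty_disjoint, hd, hd.symm]
  have hU : (⋃ k, Δ k) = A ∪ B := by
    apply Set.Subset.antisymm
    · refine Set.iUnion_subset fun k => ?_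
      simp only [hΔdef]
      split_ifs <;> first
        | exact Set.subset_union_left
        | exact Set.subset_union_right
        | exact Set.empty_subset _
    · apply Set.union_subset
      · exact Set.subset_iUnion_of_subset 0 (by simp [hΔdef])
      · exact Set.subset_iUnion_of_subset 1 (by simp [hΔdef])
  have hlub := hμ.2.2 Δ hmeas hpair
  rw [hU] at hlub
  have hsum2 : ∑ k ∈ Finset.range 2, μ (Δ k) = μ A + μ B := by
    rw [Finset.sum_range_succ, Finset.sum_range_one]
    simp [hΔdef]
  have hlub2 : IsLUB {y : WithTop E | ∃ N : ℕ, y = ∑ k ∈ Finset.range N, μ (Δ k)}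
      (μ A + μ B) := by
    constructor
    · rintro y ⟨N, rfl⟩
      rcases le_or_gt N 2 with hN | hN
      · interval_cases N
        · simpa using add_nonneg (hμ.2.1 A hA) (hμ.2.1 B hB)
        · rw [Finset.sum_range_one]
          simp only [hΔdef, if_pos rfl]
          exact le_add_of_nonneg_right (hμ.2.1 B hB)
        · rw [hsum2]
      · rw [← Finset.sum_subset (Finset.range_subset_range.mpr hN.le) ?_, hsum2]
        intro x _ hx2
        have hx2' : 2 ≤ x := by simp at hx2; omega
        have hxe : Δ x = ∅ := by
          simp only [hΔdef]
          rw [if_neg (by omega), if_neg (by omega)]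
        rw [hxe, hμ.1]
    · intro b hb
      exact hsum2 ▸ hb ⟨2, rfl⟩
  exact hlub.unique hlub2

lemma IsPosMeasure.mono {μ : Set X → WithTop E} (hμ : IsPosMeasure μ)
    {A B : Set X} (hA : MeasurableSet A) (hB : MeasurableSet B) (hAB : A ⊆ B) :
    μ A ≤ μ B := by
  have h1 : A ∪ (B \ A) = B := Set.union_diff_cancel hAB
  have h2 := hμ.add_of_disjoint hA (hB.diff hA) disjoint_sdiff_right
  rw [h1] at h2
  rw [h2]
  exact le_add_of_nonneg_right (hμ.2.1 _ (hB.diff hA))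

lemma IsPosMeasure.biUnion_finset {μ : Set X → WithTop E} (hμ : IsPosMeasure μ)
    {ι : Type*} (s : Finset ι) (B : ι → Set X)
    (hB : ∀ i ∈ s, MeasurableSet (B i))
    (hd : ∀ i ∈ s, ∀ j ∈ s, i ≠ j → Disjoint (B i) (B j)) :
    μ (⋃ i ∈ s, B i) = ∑ i ∈ s, μ (B i) := by
  classical
  induction s using Finset.induction_on with
  | empty => simpa using hμ.1
  | @insert a s ha ih =>
    rw [Finset.sum_insert ha, Finset.set_biUnion_insert]
    rw [hμ.add_of_disjoint (hB a (Finset.mem_insert_self a s))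
        (Finset.measurableSet_biUnion s fun i hi => hB i (Finset.mem_insert_of_mem hi)) ?_]
    · rw [ih (fun i hi => hB i (Finset.mem_insert_of_mem hi))
        (fun i hi j hj hij =>
          hd i (Finset.mem_insert_of_mem hi) j (Finset.mem_insert_of_mem hj) hij)]
    · rw [Set.disjoint_iUnion₂_right]
      intro i hi
      exact hd a (Finset.mem_insert_self a s) i (Finset.mem_insert_of_mem hi)
        (fun h => ha (h ▸ hi))

variable [Module ℝ E]

lemma tsmul_zero_right (r : ℝ) : tsmul r (0 : WithTop E) = 0 := by
  unfold tsmul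
  split_ifs with h
  · rfl
  · rw [← WithTop.coe_zero, WithTop.map_coe, smul_zero]

lemma tsmul_one_left (y : WithTop E) : tsmul 1 y = y := by
  unfold tsmul
  rw [if_neg one_ne_zero]
  induction y using WithTop.recTopCoe with
  | top => rfl
  | coe a => rw [WithTop.map_coe, one_smul]

lemma tsmul_add (r : ℝ) (a b : WithTop E) : tsmul r (a + b) = tsmul r a + tsmul r b := by
  unfold tsmul
  split_ifs with h
  · simp
  · induction a using WithTop.recTopCoe with
    | top => rw [WithTop.top_add, WithTop.map_top, WithTop.top_add]
    | coe a =>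
      induction b using WithTop.recTopCoe with
      | top => rw [WithTop.add_top, WithTop.map_top, WithTop.map_coe, WithTop.add_top]
      | coe b =>
        rw [← WithTop.coe_add, WithTop.map_coe, WithTop.map_coe, WithTop.map_coe, smul_add,
          WithTop.coe_add]

lemma tsmul_finset_sum (r : ℝ) {ι : Type*} (s : Finset ι) (f : ι → WithTop E) :
    tsmul r (∑ i ∈ s, f i) = ∑ i ∈ s, tsmul r (f i) := by
  classical
  induction s using Finset.induction_on with
  | empty => simpa using tsmul_zero_right r
  | @insert a s ha ih => rw [Finset.sum_insert ha, Finset.sum_insert ha, tsmul_add, ih]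

lemma tsmul_add_left {a b : ℝ} (ha : 0 ≤ a) (hb : 0 ≤ b) (y : WithTop E) :
    tsmul (a + b) y = tsmul a y + tsmul b y := by
  by_cases ha0 : a = 0
  · subst ha0
    rw [zero_add]
    have h0 : tsmul (0 : ℝ) y = 0 := if_pos rfl
    rw [h0, zero_add]
  · by_cases hb0 : b = 0
    · subst hb0
      rw [add_zero]
      have h0 : tsmul (0 : ℝ) y = 0 := if_pos rfl
      rw [h0, add_zero]
    · have hab : a + b ≠ 0 := by positivity
      unfold tsmul
      rw [if_neg hab, if_neg ha0, if_neg hb0]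
      induction y using WithTop.recTopCoe with
      | top => rw [WithTop.map_top, WithTop.map_top, WithTop.map_top, WithTop.top_add]
      | coe c =>
        rw [WithTop.map_coe, WithTop.map_coe, WithTop.map_coe, add_smul, WithTop.coe_add]

lemma tsmul_sum_left {ι : Type*} (s : Finset ι) (r : ι → ℝ) (hr : ∀ i ∈ s, 0 ≤ r i)
    (y : WithTop E) : ∑ i ∈ s, tsmul (r i) y = tsmul (∑ i ∈ s, r i) y := by
  classical
  induction s using Finset.induction_on with
  | empty =>
    simp only [Finset.sum_empty]
    exact (if_pos rfl).symm
  | @insert a s ha ih =>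
    rw [Finset.sum_insert ha, Finset.sum_insert ha,
      tsmul_add_left (hr a (Finset.mem_insert_self a s))
        (Finset.sum_nonneg fun i hi => hr i (Finset.mem_insert_of_mem hi)),
      ih fun i hi => hr i (Finset.mem_insert_of_mem hi)]

variable [PosSMulStrictMono ℝ E] [PosSMulReflectLT ℝ E]

lemma tsmul_le_self {r : ℝ} (hr0 : 0 ≤ r) (hr1 : r ≤ 1) {y : WithTop E} (hy : 0 ≤ y) :
    tsmul r y ≤ y := by
  unfold tsmul
  split_ifs with h
  · exact hy
  · induction y using WithTop.recTopCoe with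
    | top => rw [WithTop.map_top]
    | coe a =>
      rw [WithTop.map_coe, WithTop.coe_le_coe]
      rw [← WithTop.coe_zero, WithTop.coe_le_coe] at hy
      have h1 : (0 : E) ≤ (1 - r) • a := smul_nonneg (by linarith) hy
      have h2 : r • a + (1 - r) • a = a := by
        rw [← add_smul]
        norm_num
      calc r • a ≤ r • a + (1 - r) • a := le_add_of_nonneg_right h1
        _ = a := h2

/-- The key bound: a positive elementary function below the indicator of a measurable
set `V` has integral at most `μ V`. -/
lemma elem_sum_le {μ : Set X → WithTop E} (hμ : IsPosMeasure μ)
    {n : ℕ} (r : Fin n → ℝ) (Δ : Fin n → Set X)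
    (hr : ∀ i, 0 ≤ r i) (hΔ : ∀ i, MeasurableSet (Δ i))
    {V : Set X} (hV : MeasurableSet V)
    (hle : ∀ x, (∑ i, Set.indicator (Δ i) (fun _ => r i) x)
      ≤ Set.indicator V (fun _ => (1 : ℝ)) x) :
    (∑ i, tsmul (r i) (μ (Δ i))) ≤ μ V := by
  classical
  set A : Finset (Fin n) → Set X := fun S => {x | ∀ i, x ∈ Δ i ↔ i ∈ S} with hAdef
  have hAmeas : ∀ S, MeasurableSet (A S) := by
    intro S
    have hrepr : A S = ⋂ i, (if i ∈ S then Δ i else (Δ i)ᶜ) := by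
      ext x
      simp only [hAdef, Set.mem_setOf_eq, Set.mem_iInter]
      constructor
      · intro h i
        split_ifs with hi
        · exact (h i).mpr hi
        · exact fun hx => hi ((h i).mp hx)
      · intro h i
        have hi' := h i
        split_ifs at hi' with hi
        · exact ⟨fun _ => hi, fun _ => hi'⟩
        · exact ⟨fun hx => absurd hx hi', fun hS => absurd hS hi⟩
    rw [hrepr]
    exact MeasurableSet.iInter fun i => by
      split_ifs with hi
      exacts [hΔ i, (hΔ i).compl]
  have hAdisj : ∀ S T, S ≠ T → Disjoint (A S) (A T) := by
    intro S T hST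
    rw [Set.disjoint_left]
    intro x hxS hxT
    exact hST (Finset.ext fun i => by rw [← hxS i, ← hxT i])
  have hAcover : ∀ x : X, x ∈ A (Finset.univ.filter fun i => x ∈ Δ i) := by
    intro x i
    simp [hAdef]
  have hΔeq : ∀ j, Δ j = ⋃ S ∈ Finset.univ.filter (fun S => j ∈ S), A S := by
    intro j
    apply Set.Subset.antisymm
    · intro x hx
      exact Set.mem_biUnion (Finset.mem_filter.mpr ⟨Finset.mem_univ _, Finset.mem_filter.mpr ⟨Finset.mem_univ _, hx⟩⟩) (hAcover x)
    · intro x hx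
      rcases Set.mem_iUnion₂.mp hx with ⟨S, hS, hxS⟩
      exact (hxS j).mpr (Finset.mem_filter.mp hS).2
  have hμΔ : ∀ j, μ (Δ j) = ∑ S ∈ Finset.univ.filter (fun S => j ∈ S), μ (A S) := by
    intro j
    rw [hΔeq j]
    exact hμ.biUnion_finset _ _ (fun S _ => hAmeas S) (fun S _ T _ hST => hAdisj S T hST)
  have hsum_nonneg : ∀ S : Finset (Fin n), (0 : ℝ) ≤ ∑ i ∈ S, r i :=
    fun S => Finset.sum_nonneg fun i _ => hr i
  calc ∑ i, tsmul (r i) (μ (Δ i))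
      = ∑ i, ∑ S ∈ Finset.univ.filter (fun S => i ∈ S), tsmul (r i) (μ (A S)) := by
        refine Finset.sum_congr rfl fun i _ => ?_
        rw [hμΔ i, tsmul_finset_sum]
    _ = ∑ S : Finset (Fin n), ∑ i ∈ S, tsmul (r i) (μ (A S)) := by
        simp_rw [Finset.sum_filter]
        rw [Finset.sum_comm]
        refine Finset.sum_congr rfl fun S _ => ?_
        rw [Finset.sum_ite_mem, Finset.univ_inter]
    _ = ∑ S : Finset (Fin n), tsmul (∑ i ∈ S, r i) (μ (A S)) := by
        refine Finset.sum_congr rfl fun S _ => ?_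
        exact tsmul_sum_left S r (fun i _ => hr i) (μ (A S))
    _ ≤ ∑ S : Finset (Fin n), μ (A S ∩ V) := by
        refine Finset.sum_le_sum fun S _ => ?_
        by_cases hc : (∑ i ∈ S, r i) = 0
        · rw [hc]
          have h0 : tsmul (0 : ℝ) (μ (A S)) = 0 := if_pos rfl
          rw [h0]
          exact hμ.2.1 _ ((hAmeas S).inter hV)
        · rcases Set.eq_empty_or_nonempty (A S) with hAe | ⟨x, hx⟩
          · rw [hAe, hμ.1, tsmul_zero_right]
            exact hμ.2.1 _ (MeasurableSet.empty.inter hV)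
          · have hcpos : (0 : ℝ) < ∑ i ∈ S, r i := lt_of_le_of_ne (hsum_nonneg S) (Ne.symm hc)
            have hval : ∀ y ∈ A S,
                (∑ i, Set.indicator (Δ i) (fun _ => r i) y) = ∑ i ∈ S, r i := by
              intro y hy
              have hterm : ∀ i : Fin n,
                  Set.indicator (Δ i) (fun _ => r i) y = if i ∈ S then r i else 0 := by
                intro i
                by_cases hi : i ∈ S
                · rw [if_pos hi, Set.indicator_of_mem ((hy i).mpr hi)]
                · rw [if_neg hi, Set.indicator_of_notMem (fun h => hi ((hy i).mp h))]
              rw [Finset.sum_congr rfl fun i _ => hterm i, Finset.sum_ite_mem,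
                Finset.univ_inter]
            have hsub : A S ⊆ V := by
              intro y hy
              by_contra hyV
              have h := hle y
              rw [hval y hy, Set.indicator_of_notMem hyV] at h
              exact absurd h (not_le.mpr hcpos)
            have hc1 : (∑ i ∈ S, r i) ≤ 1 := by
              have h := hle x
              rwa [hval x hx, Set.indicator_of_mem (hsub hx)] at h
            rw [Set.inter_eq_self_of_subset_left hsub]
            exact tsmul_le_self (hsum_nonneg S) hc1 (hμ.2.1 _ (hAmeas S))
    _ = μ (⋃ S ∈ (Finset.univ : Finset (Finset (Fin n))), (A S ∩ V)) := by
        rw [hμ.biUnion_finset _ _ (fun S _ => (hAmeas S).inter hV)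
          (fun S _ T _ hST =>
            (hAdisj S T hST).mono Set.inter_subset_left Set.inter_subset_left)]
    _ = μ V := by
        congr 1
        apply Set.Subset.antisymm
        · exact Set.iUnion₂_subset fun S _ => Set.inter_subset_right
        · intro x hx
          exact Set.mem_biUnion (Finset.mem_univ _) ⟨hAcover x, hx⟩

end AuxLemmas

/-- Uniqueness of the representing regular Borel measure: if `X` is a locally compact
Hausdorff space, `E` a monotone complete and normal partially ordered vector space,
`π : C_c(X) → E` a positive linear operator, and `μ`, `μ'` are regular Borel measures
with values in the extended positive cone of `E` both representing `π` via the order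
integral, then `μ = μ'` on the Borel σ-algebra. -/
theorem representing_regular_measure_unique
    {X : Type*} [TopologicalSpace X] [MeasurableSpace X] [BorelSpace X]
    [LocallyCompactSpace X] [T2Space X]
    {E : Type*} [AddCommGroup E] [PartialOrder E] [IsOrderedAddMonoid E] [Module ℝ E] [PosSMulStrictMono ℝ E] [PosSMulReflectLT ℝ E]
    (hmc : MonotoneComplete E) (hnormal : IsNormalPOVS E)
    (π : C_c(X, ℝ) →ₗ[ℝ] E) (hπ : ∀ f : C_c(X, ℝ), (∀ x, 0 ≤ f x) → 0 ≤ π f)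
    (μ μ' : Set X → WithTop E)
    (hμ : IsPosMeasure μ) (hμreg : IsRegularBorel μ)
    (hμ' : IsPosMeasure μ') (hμ'reg : IsRegularBorel μ')
    (hrep : ∀ f : C_c(X, ℝ), (∀ x, 0 ≤ f x) →
      IsLUB (elemBelow μ (fun x => f x)) ((π f : E) : WithTop E))
    (hrep' : ∀ f : C_c(X, ℝ), (∀ x, 0 ≤ f x) →
      IsLUB (elemBelow μ' (fun x => f x)) ((π f : E) : WithTop E)) :
    ∀ Δ : Set X, MeasurableSet Δ → μ Δ = μ' Δ := by
  classical
  have key : ∀ (ν ν' : Set X → WithTop E), IsPosMeasure ν → IsPosMeasure ν' →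
      (∀ f : C_c(X, ℝ), (∀ x, 0 ≤ f x) →
        IsLUB (elemBelow ν (fun x => f x)) ((π f : E) : WithTop E)) →
      (∀ f : C_c(X, ℝ), (∀ x, 0 ≤ f x) →
        IsLUB (elemBelow ν' (fun x => f x)) ((π f : E) : WithTop E)) →
      ∀ K V : Set X, IsCompact K → IsOpen V → K ⊆ V → ν K ≤ ν' V := by
    intro ν ν' hν hν' hrepν hrepν' K V hK hVo hKV
    obtain ⟨f, hf1, hf0, hfc, hf01⟩ :=
      exists_continuous_one_zero_of_isCompact hK hVo.isClosed_compl
        (Set.disjoint_compl_right_iff_subset.mpr hKV)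
    set g : C_c(X, ℝ) := ⟨f, hfc⟩ with hg
    have hgx : ∀ x, g x = f x := fun x => rfl
    have hgpos : ∀ x, 0 ≤ g x := fun x => (hf01 x).1
    have hKmeas : MeasurableSet K := hK.isClosed.measurableSet
    have h1 : ν K ≤ ((π g : E) : WithTop E) := by
      apply (hrepν g hgpos).1
      refine ⟨1, fun _ => 1, fun _ => K, fun _ => zero_le_one, fun _ => hKmeas, ?_, ?_⟩
      · intro x
        rw [Fin.sum_univ_one]
        by_cases hx : x ∈ K
        · rw [Set.indicator_of_mem hx]
          exact le_of_eq (hf1 hx).symm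
        · rw [Set.indicator_of_notMem hx]
          exact hgpos x
      · rw [Fin.sum_univ_one, tsmul_one_left]
    have h2 : ((π g : E) : WithTop E) ≤ ν' V := by
      apply (hrepν' g hgpos).2
      rintro y ⟨m, r, Δ, hr, hΔm, hineq, rfl⟩
      refine elem_sum_le hν' r Δ hr hΔm hVo.measurableSet ?_
      intro x
      refine (hineq x).trans ?_
      by_cases hx : x ∈ V
      · rw [Set.indicator_of_mem hx]
        exact (hf01 x).2
      · rw [Set.indicator_of_notMem hx]
        exact le_of_eq (hf0 hx)
    exact h1.trans h2
  have hcompact : ∀ K : Set X, IsCompact K → μ K = μ' K := by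
    intro K hK
    refine le_antisymm ?_ ?_
    · refine (hμ'reg.2.2 K hK.isClosed.measurableSet).2 ?_
      rintro y ⟨V, hVo, hKV, rfl⟩
      exact key μ μ' hμ hμ' hrep hrep' K V hK hVo hKV
    · refine (hμreg.2.2 K hK.isClosed.measurableSet).2 ?_
      rintro y ⟨V, hVo, hKV, rfl⟩
      exact key μ' μ hμ' hμ hrep' hrep K V hK hVo hKV
  have hopen : ∀ V : Set X, IsOpen V → μ V = μ' V := by
    intro V hV
    have h1 := hμreg.2.1 V hV
    have h2 := hμ'reg.2.1 V hV
    have hset : {y : WithTop E | ∃ K : Set X, IsCompact K ∧ K ⊆ V ∧ y = μ K}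
        = {y : WithTop E | ∃ K : Set X, IsCompact K ∧ K ⊆ V ∧ y = μ' K} := by
      ext y
      constructor <;> rintro ⟨K, hK, hKV, rfl⟩
      · exact ⟨K, hK, hKV, hcompact K hK⟩
      · exact ⟨K, hK, hKV, (hcompact K hK).symm⟩
    rw [InnerRegularAt, hset] at h1
    exact h1.unique h2
  intro Δ hΔ
  have h1 := hμreg.2.2 Δ hΔ
  have h2 := hμ'reg.2.2 Δ hΔ
  have hset : {y : WithTop E | ∃ V : Set X, IsOpen V ∧ Δ ⊆ V ∧ y = μ V}
      = {y : WithTop E | ∃ V : Set X, IsOpen V ∧ Δ ⊆ V ∧ y = μ' V} := by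
    ext y
    constructor <;> rintro ⟨V, hV, hΔV, rfl⟩
    · exact ⟨V, hV, hΔV, hopen V hV⟩
    · exact ⟨V, hV, hΔV, (hopen V hV).symm⟩
  rw [OuterRegularAt, hset] at h1
  exact h1.unique h2
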